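/- Let p ∈ [0,1], let (Z_i)_{i∈ℕ} be an i.i.d. sequence of Bernoulli(p) random variables on a probability space Ω, let μ̂_n = (1/n)∑_{i=1}^n Z_i, and let J be a stopping time with values in ℕ ∪ {∞} with respect to the filtration generated by the samples such that Pr[J < ∞] = 1. Then for every δ > 0, Pr[|μ̂_J − p| ≤ ε(δ, J)] ≥ 1 − δ, where ε(δ,n) = sqrt(((3/5)·log(log_{11/10}(n) + 1) + (5/9)·log(24/δ))/n). -/

import Mathlib

open MeasureTheory ProbabilityTheory
open scoped NNReal ENNReal

/-- The adaptive confidence radius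
`ε(δ,n) = sqrt(((3/5)·log(log_{11/10}(n) + 1) + (5/9)·log(24/δ))/n)`. -/
noncomputable def eps (δ : ℝ) (n : ℕ) : ℝ :=
  Real.sqrt (((3 / 5) * Real.log (Real.log n / Real.log (11 / 10) + 1)
      + (5 / 9) * Real.log (24 / δ)) / n)

/-- The empirical mean `μ̂_n = (1/n) ∑_{i=1}^n Z_i`. -/
noncomputable def muhat {Ω : Type*} (Z : ℕ → Ω → ℝ) (n : ℕ) (ω : Ω) : ℝ :=
  (1 / n : ℝ) * ∑ i ∈ Finset.Icc 1 n, Z i ω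

section Auxiliary


/-- Hoeffding's lemma for a Bernoulli(p) variable. -/
lemma bern_mgf_le (p : ℝ) (hp0 : 0 ≤ p) (hp1 : p ≤ 1) (t : ℝ) :
    (1 - p) * Real.exp (-(t * p)) + p * Real.exp (t * (1 - p)) ≤ Real.exp (t ^ 2 / 8) := by
  set D : ℝ → ℝ := fun x => 1 - p + p * Real.exp x with hDdef
  have hD : ∀ x, 0 < D x := by
    intro x
    rcases eq_or_lt_of_le hp0 with h | h
    · simp [hDdef, ← h]
    · have := Real.exp_pos x
      have : 0 < p * Real.exp x := mul_pos h this
      simp only [hDdef]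
      nlinarith
  have hDd : ∀ x, HasDerivAt D (p * Real.exp x) x := by
    intro x
    exact ((Real.hasDerivAt_exp x).const_mul p).const_add (1 - p)
  set G : ℝ → ℝ := fun x => x / 4 + p - p * Real.exp x / D x with hGdef
  set g : ℝ → ℝ := fun x => x ^ 2 / 8 + x * p - Real.log (D x) with hgdef
  have hgd : ∀ x, HasDerivAt g (G x) x := by
    intro x
    have h1 : HasDerivAt (fun y : ℝ => y ^ 2 / 8) (x / 4) x := by
      have := (hasDerivAt_pow 2 x).div_const 8
      refine this.congr_deriv ?_
      norm_num
      ring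
    have h2 : HasDerivAt (fun y : ℝ => y * p) p x := hasDerivAt_mul_const p
    have h3 : HasDerivAt (fun y => Real.log (D y)) (p * Real.exp x / D x) x :=
      (hDd x).log (hD x).ne'
    exact (h1.add h2).sub h3
  have hGd : ∀ x, HasDerivAt G
      (1 / 4 - (p * Real.exp x * D x - p * Real.exp x * (p * Real.exp x)) / (D x) ^ 2) x := by
    intro x
    have h4 : HasDerivAt (fun y : ℝ => y / 4 + p) (1 / 4) x := by
      simpa using ((hasDerivAt_id x).div_const 4).add_const p
    have h5 : HasDerivAt (fun y => p * Real.exp y) (p * Real.exp x) x :=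
      (Real.hasDerivAt_exp x).const_mul p
    have h6 : HasDerivAt (fun y => p * Real.exp y / D y)
        ((p * Real.exp x * D x - p * Real.exp x * (p * Real.exp x)) / (D x) ^ 2) x :=
      h5.div (hDd x) (hD x).ne'
    exact h4.sub h6
  have hGnn : ∀ x, 0 ≤ 1 / 4 - (p * Real.exp x * D x - p * Real.exp x * (p * Real.exp x)) / (D x) ^ 2 := by
    intro x
    have hD2 : 0 < (D x) ^ 2 := pow_pos (hD x) 2
    have hnum : (p * Real.exp x * D x - p * Real.exp x * (p * Real.exp x)) / (D x) ^ 2 ≤ 1 / 4 := by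
      rw [div_le_iff₀ hD2]
      have h := sq_nonneg ((1 - p) - p * Real.exp x)
      simp only [hDdef]
      nlinarith [Real.exp_pos x]
    linarith
  have hGmono : Monotone G := by
    refine monotone_of_deriv_nonneg (fun x => (hGd x).differentiableAt) ?_
    intro x
    rw [(hGd x).deriv]
    exact hGnn x
  have hG0 : G 0 = 0 := by
    simp [hGdef, hDdef, Real.exp_zero]
  have hgnn : ∀ x, 0 ≤ g x := by
    have hg0 : g 0 = 0 := by simp [hgdef, hDdef, Real.exp_zero]
    have hgdiff : ∀ x, DifferentiableAt ℝ g x := fun x => (hgd x).differentiableAt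
    intro x
    rcases le_total 0 x with hx | hx
    · have hmono : MonotoneOn g (Set.Ici (0 : ℝ)) := by
        refine monotoneOn_of_deriv_nonneg (convex_Ici 0)
          (Differentiable.continuous (fun y => hgdiff y)).continuousOn
          (fun y _ => (hgdiff y).differentiableWithinAt) ?_
        intro y hy
        rw [(hgd y).deriv]
        have : (0:ℝ) ≤ y := interior_subset (s := Set.Ici (0:ℝ)) hy
        calc (0:ℝ) = G 0 := hG0.symm
        _ ≤ G y := hGmono this
      have := hmono (Set.self_mem_Ici) (Set.mem_Ici.2 hx) hx
      rwa [hg0] at this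
    · have hmono : AntitoneOn g (Set.Iic (0 : ℝ)) := by
        refine antitoneOn_of_deriv_nonpos (convex_Iic 0)
          (Differentiable.continuous (fun y => hgdiff y)).continuousOn
          (fun y _ => (hgdiff y).differentiableWithinAt) ?_
        intro y hy
        rw [(hgd y).deriv]
        have : y ≤ (0:ℝ) := interior_subset (s := Set.Iic (0:ℝ)) hy
        calc G y ≤ G 0 := hGmono this
        _ = 0 := hG0
      have := hmono (Set.mem_Iic.2 hx) (Set.self_mem_Iic) hx
      rwa [hg0] at this
  -- conclude
  have hlog : Real.log (D t) ≤ t ^ 2 / 8 + t * p := by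
    have := hgnn t
    simp only [hgdef] at this
    linarith
  have hDle : D t ≤ Real.exp (t ^ 2 / 8 + t * p) :=
    (Real.log_le_iff_le_exp (hD t)).1 hlog
  have key : Real.exp (-(t * p)) * D t ≤ Real.exp (t ^ 2 / 8) := by
    calc Real.exp (-(t * p)) * D t ≤ Real.exp (-(t * p)) * Real.exp (t ^ 2 / 8 + t * p) := by
          exact mul_le_mul_of_nonneg_left hDle (Real.exp_nonneg _)
    _ = Real.exp (t ^ 2 / 8) := by
          rw [← Real.exp_add]; ring_nf
  calc (1 - p) * Real.exp (-(t * p)) + p * Real.exp (t * (1 - p))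
      = Real.exp (-(t * p)) * D t := by
        simp only [hDdef]
        rw [show t * (1 - p) = -(t * p) + t by ring, Real.exp_add]
        ring
  _ ≤ Real.exp (t ^ 2 / 8) := key



variable {Ω : Type*} [MeasurableSpace Ω] {μ : Measure Ω} [IsProbabilityMeasure μ]

/-- mgf of a Bernoulli(p) variable shifted by its mean. -/
lemma bern_integral_exp {Y : Ω → ℝ} (hY : Measurable Y)
    (hval : ∀ ω, Y ω = 0 ∨ Y ω = 1) (hbern : μ {ω | Y ω = 1} = ENNReal.ofReal p)
    (hp0 : 0 ≤ p) (t : ℝ) :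
    ∫ ω, Real.exp (t * (Y ω - p)) ∂μ
      = (1 - p) * Real.exp (-(t * p)) + p * Real.exp (t * (1 - p)) := by
  set A : Set Ω := {ω | Y ω = 1} with hAdef
  have hA : MeasurableSet A := hY (measurableSet_singleton 1)
  have hfun : (fun ω => Real.exp (t * (Y ω - p)))
      = fun ω => A.indicator (fun _ => Real.exp (t * (1 - p)) - Real.exp (-(t * p))) ω
          + Real.exp (-(t * p)) := by
    funext ω
    rcases hval ω with h | h
    · have hω : ω ∉ A := by simp [hAdef, h]
      simp [Set.indicator_of_notMem hω, h]
    · have hω : ω ∈ A := by simp [hAdef, h]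
      simp [Set.indicator_of_mem hω, h]
  rw [hfun, integral_add ((integrable_const _).indicator hA) (integrable_const _),
    integral_indicator_const _ hA, integral_const]
  simp only [measureReal_def, hbern, measure_univ, ENNReal.toReal_one, one_smul, smul_eq_mul,
    ENNReal.toReal_ofReal hp0]
  ring

lemma bern_mgf_ge_one (hp0 : 0 ≤ p) (hp1 : p ≤ 1) (t : ℝ) :
    (1 : ℝ) ≤ (1 - p) * Real.exp (-(t * p)) + p * Real.exp (t * (1 - p)) := by
  have h := convexOn_exp.2 (Set.mem_univ (-(t * p))) (Set.mem_univ (t * (1 - p)))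
    (by linarith : (0:ℝ) ≤ 1 - p) hp0 (by ring)
  simp only [smul_eq_mul] at h
  have harg : (1 - p) * -(t * p) + p * (t * (1 - p)) = 0 := by ring
  rw [harg, Real.exp_zero] at h
  exact h

/-- reindexing an independent family by `i ↦ i + 1`. -/
lemma iIndepFun_succ {Z : ℕ → Ω → ℝ}
    (hindep : iIndepFun Z μ) :
    iIndepFun (fun i => Z (i + 1)) μ := by
  rw [iIndepFun_iff] at hindep ⊢
  intro s f' hf'
  classical
  have h := hindep (s.image (· + 1)) (f' := fun j => f' (j - 1)) ?_
  · rw [Finset.prod_image (fun a _ b _ h => by simpa using h)] at h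
    have hInter : (⋂ i ∈ s.image (· + 1), f' (i - 1)) = ⋂ j ∈ s, f' j := by
      ext ω
      simp only [Set.mem_iInter, Finset.mem_image]
      constructor
      · intro H j hj
        have := H (j + 1) ⟨j, hj, rfl⟩
        simpa using this
      · rintro H i ⟨j, hj, rfl⟩
        simpa using H j hj
    rw [hInter] at h
    rw [h]
    apply Finset.prod_congr rfl
    intro j _
    simp
  · intro i hi
    simp only [Finset.mem_image] at hi
    obtain ⟨j, hj, rfl⟩ := hi
    simpa using hf' j hj



variable {Ω : Type*} [MeasurableSpace Ω] {μ : Measure Ω} [IsProbabilityMeasure μ]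
  {p : ℝ} {Y : ℕ → Ω → ℝ}



-- the mgf bound stated before (sorried here, proved in A/B)

theorem onesided_doob (hp0 : 0 ≤ p) (hp1 : p ≤ 1)
    (hYm : ∀ i, Measurable (Y i))
    (hYindep : iIndepFun Y μ)
    (hYval : ∀ i ω, Y i ω = 0 ∨ Y i ω = 1)
    (hYbern : ∀ i, μ {ω | Y i ω = 1} = ENNReal.ofReal p)
    (N : ℕ) (hN : 1 ≤ N) (b : ℝ) (hb : 0 < b) :
    μ {ω | ∃ n, 1 ≤ n ∧ n ≤ N ∧ b ≤ (∑ i ∈ Finset.range n, Y i ω) - n * p}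
      ≤ ENNReal.ofReal (Real.exp (-(2 * b ^ 2 / N))) := by
  classical
  set t : ℝ := 4 * b / N with htdef
  have hNR : (0:ℝ) < N := by exact_mod_cast hN
  have ht : 0 < t := by positivity
  -- the process
  set T : ℕ → Ω → ℝ := fun n ω => ∑ i ∈ Finset.range n, Y i ω with hTdef
  set f : ℕ → Ω → ℝ := fun n ω => Real.exp (t * (T (n + 1) ω - ((n : ℝ) + 1) * p)) with hfdef
  have hY01 : ∀ i ω, 0 ≤ Y i ω ∧ Y i ω ≤ 1 := by
    intro i ω; rcases hYval i ω with h | h <;> simp [h]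
  have hTmeas : ∀ n, Measurable (T n) := fun n =>
    Finset.measurable_sum _ (fun i _ => hYm i)
  have hfmeas : ∀ n, Measurable (f n) := fun n =>
    (Real.measurable_exp.comp (((hTmeas (n+1)).sub_const _).const_mul t))
  have hfbound : ∀ n ω, f n ω ≤ Real.exp (|t| * ((n:ℝ) + 1) * (1 + |p|)) := by
    intro n ω
    apply Real.exp_le_exp.2
    have hT0 : 0 ≤ T (n+1) ω := Finset.sum_nonneg fun i _ => (hY01 i ω).1
    have hTn : T (n+1) ω ≤ (n:ℝ) + 1 := by
      calc T (n+1) ω ≤ ∑ i ∈ Finset.range (n+1), (1:ℝ) :=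
            Finset.sum_le_sum fun i _ => (hY01 i ω).2
      _ = (n:ℝ) + 1 := by simp
    have h1 : |T (n+1) ω - ((n:ℝ)+1) * p| ≤ ((n:ℝ)+1) * (1 + |p|) := by
      rw [abs_le]
      constructor
      · have : -(((n:ℝ)+1) * (1 + |p|)) ≤ -(((n:ℝ)+1) * p) := by
          have : ((n:ℝ)+1) * p ≤ ((n:ℝ)+1) * (1 + |p|) := by
            apply mul_le_mul_of_nonneg_left _ (by positivity)
            cases abs_cases p <;> nlinarith [abs_nonneg p]
          linarith
        nlinarith [hT0]
      · have hple : -(((n:ℝ)+1) * p) ≤ ((n:ℝ)+1) * |p| := by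
          rw [← mul_neg]
          apply mul_le_mul_of_nonneg_left _ (by positivity)
          cases abs_cases p <;> linarith
        nlinarith [hTn, abs_nonneg p]
    calc t * (T (n+1) ω - ((n:ℝ)+1) * p) ≤ |t * (T (n+1) ω - ((n:ℝ)+1) * p)| := le_abs_self _
    _ = |t| * |T (n+1) ω - ((n:ℝ)+1) * p| := abs_mul _ _
    _ ≤ |t| * (((n:ℝ)+1) * (1 + |p|)) := by
        apply mul_le_mul_of_nonneg_left h1 (abs_nonneg t)
    _ = |t| * ((n:ℝ)+1) * (1 + |p|) := by ring
  have hfint : ∀ n, Integrable (f n) μ := by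
    intro n
    refine Integrable.mono' (integrable_const (Real.exp (|t| * ((n:ℝ) + 1) * (1 + |p|))))
      (hfmeas n).aestronglyMeasurable ?_
    filter_upwards with ω
    rw [Real.norm_eq_abs, abs_of_pos (Real.exp_pos _)]
    exact hfbound n ω
  -- step functions
  set s : ℕ → Ω → ℝ := fun i ω => Real.exp (t * (Y i ω - p)) with hsdef
  have hsmeas : ∀ i, Measurable (s i) :=
    fun i => Real.measurable_exp.comp (((hYm i).sub_const _).const_mul t)
  have hsbound : ∀ i ω, s i ω ≤ Real.exp (|t| * (1 + |p|)) := by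
    intro i ω
    apply Real.exp_le_exp.2
    have := (hY01 i ω).1; have := (hY01 i ω).2
    calc t * (Y i ω - p) ≤ |t| * |Y i ω - p| := by
          rw [← abs_mul]; exact le_abs_self _
    _ ≤ |t| * (1 + |p|) := by
        apply mul_le_mul_of_nonneg_left _ (abs_nonneg t)
        rw [abs_le]
        cases abs_cases p <;> constructor <;> nlinarith
  have hsint : ∀ i, Integrable (s i) μ := by
    intro i
    refine Integrable.mono' (integrable_const (Real.exp (|t| * (1 + |p|))))
      (hsmeas i).aestronglyMeasurable ?_
    filter_upwards with ω
    rw [Real.norm_eq_abs, abs_of_pos (Real.exp_pos _)]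
    exact hsbound i ω
  have hsint_eq : ∀ i, ∫ ω, s i ω ∂μ
      = (1 - p) * Real.exp (-(t * p)) + p * Real.exp (t * (1 - p)) := fun i =>
    bern_integral_exp (hYm i) (hYval i) (hYbern i) hp0 t
  -- splitting
  have hsplit : ∀ n, f (n + 1) = f n * s (n + 1) := by
    intro n
    funext ω
    simp only [hfdef, hsdef, hTdef, Pi.mul_apply]
    rw [Finset.sum_range_succ, ← Real.exp_add]
    congr 1
    push_cast
    ring
  -- Expectation bound by induction
  have hEbound : ∀ n, ∫ ω, f n ω ∂μ ≤ Real.exp (((n:ℝ) + 1) * t ^ 2 / 8) := by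
    intro n
    induction n with
    | zero =>
      have : f 0 = s 0 := by
        funext ω
        simp [hfdef, hsdef, hTdef]
      rw [this, hsint_eq 0]
      calc (1 - p) * Real.exp (-(t * p)) + p * Real.exp (t * (1 - p))
          ≤ Real.exp (t ^ 2 / 8) := bern_mgf_le p hp0 hp1 t
      _ ≤ Real.exp ((((0:ℕ):ℝ) + 1) * t ^ 2 / 8) := by norm_num
    | succ n ih =>
      have hIndepYf : IndepFun (fun a (i : (Finset.range (n+1) : Finset ℕ)) => Y i a)
          (fun a (i : ({n+1} : Finset ℕ)) => Y i a) μ :=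
        hYindep.indepFun_finset _ _ (by simp) hYm
      set g1 : ((i : (Finset.range (n+1) : Finset ℕ)) → ℝ) → ℝ :=
        fun v => Real.exp (t * ((∑ i ∈ (Finset.range (n+1)).attach, v i) - ((n:ℝ)+1) * p))
        with hg1def
      set g2 : ((i : ({n+1} : Finset ℕ)) → ℝ) → ℝ :=
        fun v => Real.exp (t * (v ⟨n+1, by simp⟩ - p)) with hg2def
      have hg1 : Measurable g1 := by
        apply Real.measurable_exp.comp
        apply Measurable.const_mul
        apply Measurable.sub_const
        exact Finset.measurable_sum _ (fun i _ => measurable_pi_apply i)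
      have hg2 : Measurable g2 := by
        apply Real.measurable_exp.comp
        apply Measurable.const_mul
        apply Measurable.sub_const
        exact measurable_pi_apply _
      have hIndep : IndepFun (f n) (s (n+1)) μ := by
        have hcomp := hIndepYf.comp hg1 hg2
        have he1 : g1 ∘ (fun a (i : (Finset.range (n+1) : Finset ℕ)) => Y i a) = f n := by
          funext a
          simp only [Function.comp_apply, hg1def, hfdef, hTdef]
          congr 1
          rw [Finset.sum_attach (Finset.range (n+1)) (fun i => Y i a)]
        have he2 : g2 ∘ (fun a (i : ({n+1} : Finset ℕ)) => Y i a) = s (n+1) := by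
          funext a
          simp only [Function.comp_apply, hg2def, hsdef]
        rwa [he1, he2] at hcomp
      rw [hsplit n]
      have hmul : ∫ ω, (f n * s (n+1)) ω ∂μ = (∫ ω, f n ω ∂μ) * ∫ ω, s (n+1) ω ∂μ :=
        hIndep.integral_mul_eq_mul_integral (hfint n).aestronglyMeasurable (hsint (n+1)).aestronglyMeasurable
      rw [hmul, hsint_eq (n+1)]
      have h1 : (0:ℝ) ≤ ∫ ω, f n ω ∂μ :=
        integral_nonneg (fun ω => (Real.exp_pos _).le)
      have h2 : (1 - p) * Real.exp (-(t * p)) + p * Real.exp (t * (1 - p))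
          ≤ Real.exp (t ^ 2 / 8) := bern_mgf_le p hp0 hp1 t
      have h3 : (0:ℝ) ≤ (1 - p) * Real.exp (-(t * p)) + p * Real.exp (t * (1 - p)) :=
        le_trans zero_le_one (bern_mgf_ge_one hp0 hp1 t)
      calc (∫ ω, f n ω ∂μ) * ((1 - p) * Real.exp (-(t * p)) + p * Real.exp (t * (1 - p)))
          ≤ Real.exp (((n:ℝ) + 1) * t ^ 2 / 8) * Real.exp (t ^ 2 / 8) :=
            mul_le_mul ih h2 h3 (Real.exp_nonneg _)
      _ = Real.exp ((((n+1:ℕ):ℝ) + 1) * t ^ 2 / 8) := by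
            rw [← Real.exp_add]
            congr 1
            push_cast
            ring
  -- the filtration and submartingale
  have hYsm : ∀ i, StronglyMeasurable (Y i) := fun i => (hYm i).stronglyMeasurable
  set ℱ := MeasureTheory.Filtration.natural Y hYsm with hFdef
  have hadp : StronglyAdapted ℱ f := by
    intro n
    have hYk : ∀ k, k ≤ n → Measurable[ℱ n] (Y k) := fun k hk =>
      (((Filtration.stronglyAdapted_natural hYsm) k).mono (ℱ.mono hk)).measurable
    have hTm : Measurable[ℱ n] (T (n+1)) := by
      apply Finset.measurable_sum
      intro i hi
      exact hYk i (by simp at hi; omega)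
    exact (Real.measurable_exp.comp ((hTm.sub_const _).const_mul t)).stronglyMeasurable
  have hkey : ∀ n, f n ≤ᵐ[μ] μ[f (n+1)|ℱ n] := by
    intro n
    have hindepstep : Indep (MeasurableSpace.comap (s (n+1)) inferInstance) (ℱ n) μ := by
      have h1 : Indep (MeasurableSpace.comap (Y (n+1)) inferInstance) (ℱ n) μ :=
        hYindep.indep_comap_natural_of_lt hYsm (Nat.lt_succ_self n)
      refine indep_of_indep_of_le_left h1 ?_
      have hphi : Measurable (fun x : ℝ => Real.exp (t * (x - p))) :=
        Real.measurable_exp.comp ((measurable_id.sub_const _).const_mul t)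
      have : MeasurableSpace.comap (s (n+1)) (inferInstance : MeasurableSpace ℝ)
          = MeasurableSpace.comap (Y (n+1))
            (MeasurableSpace.comap (fun x : ℝ => Real.exp (t * (x - p))) inferInstance) := by
        rw [MeasurableSpace.comap_comp]
        rfl
      rw [this]
      exact MeasurableSpace.comap_mono hphi.comap_le
    have hce : μ[s (n+1)|ℱ n] =ᵐ[μ] fun _ => ∫ ω, s (n+1) ω ∂μ :=
      condExp_indep_eq ((hsmeas (n+1)).comap_le) (ℱ.le n)
        (comap_measurable (s (n+1))).stronglyMeasurable hindepstep
    have hmul : μ[f (n+1)|ℱ n] =ᵐ[μ] f n * μ[s (n+1)|ℱ n] := by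
      rw [hsplit n]
      exact condExp_mul_of_stronglyMeasurable_left (hadp n)
        (by rw [← hsplit n]; exact hfint (n+1)) (hsint (n+1))
    have hone : (1:ℝ) ≤ ∫ ω, s (n+1) ω ∂μ := by
      rw [hsint_eq (n+1)]
      exact bern_mgf_ge_one hp0 hp1 t
    filter_upwards [hmul, hce] with ω h1 h2
    rw [h1, Pi.mul_apply, h2]
    exact le_mul_of_one_le_right (Real.exp_nonneg _) hone
  have hnonneg : (0 : ℕ → Ω → ℝ) ≤ f := fun n ω => (Real.exp_pos _).le
  have hsub : Submartingale f ℱ μ := submartingale_nat hadp hfint hkey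
  -- apply Doob maximal inequality
  set c : ℝ := t * b with hcdef
  set ε : ℝ≥0 := (Real.exp c).toNNReal with hεdef
  have hεcoe : (ε : ℝ) = Real.exp c := Real.coe_toNNReal _ (Real.exp_nonneg _)
  have hNsub : N - 1 + 1 = N := Nat.succ_pred_eq_of_pos hN
  have hmax := maximal_ineq hsub hnonneg (ε := ε) (N - 1)
  set SupSet := {ω | (ε : ℝ) ≤ (Finset.range (N-1+1)).sup' Finset.nonempty_range_add_one
    fun k => f k ω} with hSupdef
  have hsubset : {ω | ∃ n, 1 ≤ n ∧ n ≤ N ∧ b ≤ (∑ i ∈ Finset.range n, Y i ω) - n * p}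
      ⊆ SupSet := by
    rintro ω ⟨n, hn1, hnN, hball⟩
    have hk : n - 1 ∈ Finset.range (N-1+1) := by
      rw [hNsub]
      exact Finset.mem_range.2 (by omega)
    refine le_trans ?_ (Finset.le_sup' (fun k => f k ω) hk)
    rw [hεcoe]
    apply Real.exp_le_exp.2
    have hidx : n - 1 + 1 = n := Nat.succ_pred_eq_of_pos hn1
    have hcast : ((n-1:ℕ):ℝ) + 1 = (n:ℝ) := by
      rw [Nat.cast_sub hn1]
      push_cast
      ring
    simp only [hfdef, hTdef, hidx, hcast]
    have := mul_le_mul_of_nonneg_left hball ht.le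
    linarith
  have hEfin : ∫ ω, f (N-1) ω ∂μ ≤ Real.exp ((N:ℝ) * t ^ 2 / 8) := by
    have := hEbound (N-1)
    have hcast : ((N-1:ℕ):ℝ) + 1 = (N:ℝ) := by
      rw [Nat.cast_sub hN]
      push_cast
      ring
    rwa [hcast] at this
  set E : Set Ω := {ω | ∃ n, 1 ≤ n ∧ n ≤ N ∧
      b ≤ (∑ i ∈ Finset.range n, Y i ω) - n * p} with hEdef
  have hchain : (ε : ℝ≥0∞) * μ E ≤ ENNReal.ofReal (Real.exp ((N:ℝ) * t ^ 2 / 8)) := by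
    calc (ε : ℝ≥0∞) * μ E ≤ (ε : ℝ≥0∞) * μ SupSet := by
          exact mul_le_mul_right (measure_mono hsubset) _
    _ = ε • μ SupSet := by rw [ENNReal.smul_def, smul_eq_mul]
    _ ≤ ENNReal.ofReal (∫ ω in SupSet, f (N-1) ω ∂μ) := hmax
    _ ≤ ENNReal.ofReal (∫ ω, f (N-1) ω ∂μ) := by
          apply ENNReal.ofReal_le_ofReal
          exact setIntegral_le_integral (hfint (N-1))
            (Filter.Eventually.of_forall fun ω => (Real.exp_pos _).le)
    _ ≤ ENNReal.ofReal (Real.exp ((N:ℝ) * t ^ 2 / 8)) := ENNReal.ofReal_le_ofReal hEfin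
  have hεne : (ε : ℝ≥0∞) ≠ 0 := by
    simp only [ne_eq, ENNReal.coe_eq_zero]
    intro h
    have := Real.exp_pos c
    rw [hεdef] at h
    simp [Real.toNNReal_eq_zero] at h
    linarith
  have hεtop : (ε : ℝ≥0∞) ≠ ⊤ := ENNReal.coe_ne_top
  have hdiv : μ E
      ≤ ENNReal.ofReal (Real.exp ((N:ℝ) * t ^ 2 / 8)) / (ε : ℝ≥0∞) := by
    rw [ENNReal.le_div_iff_mul_le (Or.inl hεne) (Or.inl hεtop)]
    rw [mul_comm]
    exact hchain
  refine le_trans hdiv ?_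
  have : (ε : ℝ≥0∞) = ENNReal.ofReal (Real.exp c) := rfl
  rw [this, ← ENNReal.ofReal_div_of_pos (Real.exp_pos c), ← Real.exp_sub]
  apply ENNReal.ofReal_le_ofReal
  apply Real.exp_le_exp.2
  have : (N:ℝ) * t ^ 2 / 8 - c = -(2 * b ^ 2 / N) := by
    rw [htdef, hcdef, htdef]
    field_simp
    ring
  rw [this]





lemma rpow_step {a : ℝ} (ha : 1 ≤ a) :
    (a+1) ^ (-(12/11) : ℝ) ≤ 11 * a ^ (-(1/11) : ℝ) - 11 * (a+1) ^ (-(1/11) : ℝ) := by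
  have ha0 : 0 < a := lt_of_lt_of_le one_pos ha
  have hb0 : 0 < a + 1 := by linarith
  have hlog : 1/(a+1) ≤ Real.log ((a+1)/a) := by
    have h1 := Real.one_sub_inv_le_log_of_pos (x := (a+1)/a) (by positivity)
    have hinv : ((a+1)/a)⁻¹ = a/(a+1) := by rw [inv_div]
    rw [hinv] at h1
    have h2 : 1 - a/(a+1) = 1/(a+1) := by field_simp; ring
    linarith
  have hkey : 1 + (1/11) * (1/(a+1)) ≤ ((a+1)/a) ^ ((1/11) : ℝ) := by
    have h1 : ((a+1)/a) ^ ((1/11):ℝ) = Real.exp ((1/11) * Real.log ((a+1)/a)) := by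
      rw [Real.rpow_def_of_pos (by positivity)]
      ring_nf
    rw [h1]
    calc 1 + (1/11) * (1/(a+1)) ≤ 1 + (1/11) * Real.log ((a+1)/a) := by nlinarith
    _ ≤ Real.exp ((1/11) * Real.log ((a+1)/a)) := by
        have := Real.add_one_le_exp ((1/11) * Real.log ((a+1)/a))
        linarith
  have hbpow : 0 < (a+1) ^ (-(1/11):ℝ) := Real.rpow_pos_of_pos hb0 _
  have hapow : 0 < a ^ (-(1/11):ℝ) := Real.rpow_pos_of_pos ha0 _
  have hmul := mul_le_mul_of_nonneg_right hkey hbpow.le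
  have hR : ((a+1)/a) ^ ((1/11):ℝ) * (a+1) ^ (-(1/11):ℝ) = a ^ (-(1/11):ℝ) := by
    have hdiv : ((a+1)/a) ^ ((1/11):ℝ) = (a+1) ^ ((1/11):ℝ) / a ^ ((1/11):ℝ) :=
      Real.div_rpow hb0.le ha0.le _
    have hne1 : a ^ ((1/11):ℝ) ≠ 0 := (Real.rpow_pos_of_pos ha0 _).ne'
    have hne2 : (a+1) ^ ((1/11):ℝ) ≠ 0 := (Real.rpow_pos_of_pos hb0 _).ne'
    rw [hdiv, Real.rpow_neg ha0.le, Real.rpow_neg hb0.le]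
    field_simp
  have hL : (1 + (1/11) * (1/(a+1))) * (a+1) ^ (-(1/11):ℝ)
      = (a+1) ^ (-(1/11):ℝ) + (1/11) * (a+1) ^ (-(12/11):ℝ) := by
    have h12 : (a+1) ^ (-(12/11):ℝ) = (a+1) ^ (-(1/11):ℝ) * (a+1) ^ (-(1:ℝ)) := by
      rw [← Real.rpow_add hb0]
      norm_num
    rw [h12, Real.rpow_neg_one]
    field_simp
  rw [hL, hR] at hmul
  linarith

lemma sum_rpow_le_twelve (K : ℕ) :
    ∑ k ∈ Finset.range K, ((k:ℝ)+1) ^ (-(12/11) : ℝ) ≤ 12 := by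
  set F : ℕ → ℝ := fun j => 11 * ((j:ℝ)+1) ^ (-(1/11):ℝ) with hFdef
  cases K with
  | zero => norm_num
  | succ K' =>
    rw [Finset.sum_range_succ']
    have hf0 : (((0:ℕ):ℝ)+1) ^ (-(12/11):ℝ) = 1 := by norm_num
    have hstep : ∀ j ∈ Finset.range K', (((j+1:ℕ):ℝ)+1) ^ (-(12/11):ℝ) ≤ F j - F (j+1) := by
      intro j _
      have h := rpow_step (a := (j:ℝ)+1) (by have := Nat.cast_nonneg (α := ℝ) j; linarith)
      simp only [hFdef]
      have hc : (((j+1:ℕ):ℝ)+1) = ((j:ℝ)+1)+1 := by push_cast; ring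
      rw [hc]
      convert h using 3
    have hsum : ∑ j ∈ Finset.range K', (((j+1:ℕ):ℝ)+1) ^ (-(12/11):ℝ)
        ≤ ∑ j ∈ Finset.range K', (F j - F (j+1)) := Finset.sum_le_sum hstep
    rw [Finset.sum_range_sub' F K'] at hsum
    have hF0 : F 0 = 11 := by simp [hFdef]
    have hFK : 0 ≤ F K' := by positivity
    rw [hf0]
    linarith





theorem onesided_union {Ω : Type*} [MeasurableSpace Ω] {μ : Measure Ω} [IsProbabilityMeasure μ]
    {p : ℝ} {Y : ℕ → Ω → ℝ} (hp0 : 0 ≤ p) (hp1 : p ≤ 1)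
    (hYm : ∀ i, Measurable (Y i))
    (hYindep : iIndepFun Y μ)
    (hYval : ∀ i ω, Y i ω = 0 ∨ Y i ω = 1)
    (hYbern : ∀ i, μ {ω | Y i ω = 1} = ENNReal.ofReal p)
    (δ : ℝ) (hδ0 : 0 < δ) (hδ1 : δ < 1) :
    μ {ω | ∃ n : ℕ, 1 ≤ n ∧ Real.sqrt (n * ((3/5) * Real.log (Real.log n / Real.log (11/10) + 1)
        + (5/9) * Real.log (24/δ))) < (∑ i ∈ Finset.range n, Y i ω) - n * p}
      ≤ ENNReal.ofReal (δ/2) := by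
  classical
  set L : ℝ := Real.log (11/10) with hLdef
  have hL : 0 < L := Real.log_pos (by norm_num)
  have hlog24 : 0 < Real.log (24/δ) := Real.log_pos ((one_lt_div hδ0).2 (by linarith))
  set hh : ℕ → ℝ := fun n => (3/5) * Real.log (Real.log n / L + 1)
      + (5/9) * Real.log (24/δ) with hhdef
  set g : ℕ → ℝ := fun k => (3/5) * Real.log ((k:ℝ)+1) + (5/9) * Real.log (24/δ) with hgdef
  have hgpos : ∀ k, 0 < g k := by
    intro k
    have h1 : 0 ≤ Real.log ((k:ℝ)+1) :=
      Real.log_nonneg (by have := Nat.cast_nonneg (α := ℝ) k; linarith)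
    simp only [hgdef]
    nlinarith
  set N : ℕ → ℕ := fun k => ⌊(11/10:ℝ)^(k+1)⌋₊ with hNdef
  have hNpos : ∀ k, 1 ≤ N k := by
    intro k
    apply Nat.le_floor
    have : (1:ℝ) ≤ (11/10:ℝ)^(k+1) := one_le_pow₀ (by norm_num)
    exact_mod_cast this
  set b : ℕ → ℝ := fun k => Real.sqrt ((11/10:ℝ)^k * g k) with hbdef
  have hbpos : ∀ k, 0 < b k := fun k =>
    Real.sqrt_pos.2 (mul_pos (pow_pos (by norm_num) k) (hgpos k))
  set E : ℕ → Set Ω := fun k =>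
    {ω | ∃ n, 1 ≤ n ∧ n ≤ N k ∧ b k ≤ (∑ i ∈ Finset.range n, Y i ω) - n * p} with hEdef
  -- inclusion in the union of blocks
  have hincl : {ω | ∃ n : ℕ, 1 ≤ n ∧ Real.sqrt (n * ((3/5) * Real.log (Real.log n / L + 1)
      + (5/9) * Real.log (24/δ))) < (∑ i ∈ Finset.range n, Y i ω) - n * p} ⊆ ⋃ k, E k := by
    rintro ω ⟨n, hn1, hbad⟩
    have hnR : (1:ℝ) ≤ (n:ℝ) := by exact_mod_cast hn1
    have hnpos : (0:ℝ) < n := by linarith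
    have hlogn : 0 ≤ Real.log n := Real.log_nonneg hnR
    set x : ℝ := Real.log n / L with hxdef
    have hx0 : 0 ≤ x := div_nonneg hlogn hL.le
    set k : ℕ := ⌊x⌋₊ with hkdef
    have hk1 : (k:ℝ) ≤ x := Nat.floor_le hx0
    have hk2 : x < (k:ℝ) + 1 := Nat.lt_floor_add_one x
    refine Set.mem_iUnion.2 ⟨k, n, hn1, ?_, ?_⟩
    · -- n ≤ N k
      apply Nat.le_floor
      have h1 : Real.log n < ((k:ℕ)+1 : ℝ) * L := by
        have := (div_lt_iff₀ hL).1 hk2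
        linarith
      have h2 : Real.log n < Real.log ((11/10:ℝ)^(k+1)) := by
        rw [Real.log_pow]
        push_cast
        linarith
      have h3 : (n:ℝ) < (11/10:ℝ)^(k+1) :=
        (Real.log_lt_log_iff hnpos (pow_pos (by norm_num) _)).1 h2
      exact h3.le
    · -- b k ≤ deviation
      refine le_trans ?_ hbad.le
      rw [hbdef]
      apply Real.sqrt_le_sqrt
      have hpowle : (11/10:ℝ)^k ≤ (n:ℝ) := by
        have h1 : Real.log ((11/10:ℝ)^k) ≤ Real.log n := by
          rw [Real.log_pow]
          have := (le_div_iff₀ hL).1 hk1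
          push_cast
          linarith
        exact (Real.log_le_log_iff (pow_pos (by norm_num) _) hnpos).1 h1
      have hgh : g k ≤ (3/5) * Real.log (Real.log n / L + 1) + (5/9) * Real.log (24/δ) := by
        simp only [hgdef]
        have h1 : Real.log ((k:ℝ)+1) ≤ Real.log (Real.log n / L + 1) := by
          apply Real.log_le_log (by positivity)
          linarith
        linarith
      exact mul_le_mul hpowle hgh (hgpos k).le (Nat.cast_nonneg n)
  -- measure bound per block
  have hblock : ∀ k, μ (E k) ≤ ENNReal.ofReal ((δ/24) * ((k:ℝ)+1) ^ (-(12/11):ℝ)) := by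
    intro k
    refine le_trans (onesided_doob hp0 hp1 hYm hYindep hYval hYbern (N k) (hNpos k)
      (b k) (hbpos k)) (ENNReal.ofReal_le_ofReal ?_)
    have hNle : ((N k : ℕ):ℝ) ≤ (11/10:ℝ)^(k+1) := Nat.floor_le (by positivity)
    have hNposR : (0:ℝ) < (N k : ℝ) := by exact_mod_cast hNpos k
    have hbsq : (b k)^2 = (11/10:ℝ)^k * g k := by
      rw [hbdef]
      exact Real.sq_sqrt (mul_pos (pow_pos (by norm_num) k) (hgpos k)).le
    have hfrac : (20/11) * g k ≤ 2 * (b k)^2 / (N k) := by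
      rw [hbsq]
      have h1 : 2 * ((11/10:ℝ)^k * g k) / ((11/10:ℝ)^(k+1))
          ≤ 2 * ((11/10:ℝ)^k * g k) / (N k) :=
        div_le_div_of_nonneg_left
          (mul_nonneg (by norm_num) (mul_nonneg (pow_nonneg (by norm_num) _) (hgpos k).le))
          hNposR hNle
      have h2 : 2 * ((11/10:ℝ)^k * g k) / ((11/10:ℝ)^(k+1)) = (20/11) * g k := by
        rw [pow_succ]
        field_simp
        ring
      linarith
    have hexp : Real.exp (-(2 * (b k)^2 / (N k))) ≤ Real.exp (-((20/11) * g k)) := by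
      apply Real.exp_le_exp.2
      linarith
    refine le_trans hexp ?_
    have hsplit : -((20/11) * g k)
        = -((12/11) * Real.log ((k:ℝ)+1)) + -((100/99) * Real.log (24/δ)) := by
      simp only [hgdef]
      ring
    rw [hsplit, Real.exp_add]
    have h1 : Real.exp (-((12/11) * Real.log ((k:ℝ)+1))) = ((k:ℝ)+1) ^ (-(12/11):ℝ) := by
      rw [Real.rpow_def_of_pos (by positivity)]
      ring_nf
    have h2 : Real.exp (-((100/99) * Real.log (24/δ))) ≤ δ/24 := by
      have hl : -((100/99) * Real.log (24/δ)) ≤ -Real.log (24/δ) := by nlinarith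
      calc Real.exp (-((100/99) * Real.log (24/δ))) ≤ Real.exp (-Real.log (24/δ)) :=
            Real.exp_le_exp.2 hl
      _ = δ/24 := by
          rw [Real.exp_neg, Real.exp_log (by positivity)]
          rw [inv_div]
    calc Real.exp (-((12/11) * Real.log ((k:ℝ)+1))) * Real.exp (-((100/99) * Real.log (24/δ)))
        ≤ ((k:ℝ)+1) ^ (-(12/11):ℝ) * (δ/24) := by
          rw [h1]
          exact mul_le_mul_of_nonneg_left h2 (by positivity)
    _ = (δ/24) * ((k:ℝ)+1) ^ (-(12/11):ℝ) := by ring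
  -- sum up
  refine le_trans (measure_mono hincl) (le_trans (measure_iUnion_le E) ?_)
  refine le_trans (ENNReal.tsum_le_tsum (fun k => hblock k)) ?_
  apply ENNReal.tsum_le_of_sum_range_le
  intro K
  have hsum : ∑ k ∈ Finset.range K, (δ/24) * ((k:ℝ)+1) ^ (-(12/11):ℝ) ≤ δ/2 := by
    have h1 : ∑ k ∈ Finset.range K, (δ/24) * ((k:ℝ)+1) ^ (-(12/11):ℝ)
        = (δ/24) * ∑ k ∈ Finset.range K, ((k:ℝ)+1) ^ (-(12/11):ℝ) := by
      rw [Finset.mul_sum]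
    rw [h1]
    have h2 := sum_rpow_le_twelve K
    nlinarith
  calc ∑ k ∈ Finset.range K, ENNReal.ofReal ((δ/24) * ((k:ℝ)+1) ^ (-(12/11):ℝ))
      = ENNReal.ofReal (∑ k ∈ Finset.range K, (δ/24) * ((k:ℝ)+1) ^ (-(12/11):ℝ)) := by
        rw [ENNReal.ofReal_sum_of_nonneg]
        intro k _
        positivity
  _ ≤ ENNReal.ofReal (δ/2) := ENNReal.ofReal_le_ofReal hsum

end Auxiliary

/-- Adaptive concentration inequality for i.i.d. Bernoulli samples when the stopping
time is finite almost surely (Theorem `thm:bernoulliconcentration`). -/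
theorem adaptive_concentration_bernoulli_finite
    {Ω : Type*} [MeasurableSpace Ω] (μ : Measure Ω) [IsProbabilityMeasure μ]
    (p : ℝ) (hp : p ∈ Set.Icc (0 : ℝ) 1)
    (Z : ℕ → Ω → ℝ)
    (hmeas : ∀ i, Measurable (Z i))
    (hindep : iIndepFun Z μ)
    (hval : ∀ i ω, Z i ω = 0 ∨ Z i ω = 1)
    (hbern : ∀ i, μ {ω | Z i ω = 1} = ENNReal.ofReal p)
    (J : Ω → ℕ∞)
    (hJ1 : ∀ ω, 1 ≤ J ω)
    (hJstop : ∀ n : ℕ, MeasurableSet[MeasurableSpace.comap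
        (fun ω (i : Fin n) => Z ((i : ℕ) + 1) ω) inferInstance] {ω | J ω = (n : ℕ∞)})
    (hJfin : μ {ω | J ω ≠ ⊤} = 1)
    (δ : ℝ) (hδ : 0 < δ) :
    1 - ENNReal.ofReal δ
      ≤ μ {ω | ∀ n : ℕ, J ω = (n : ℕ∞) → |muhat Z n ω - p| ≤ eps δ n} := by
  rcases le_or_gt 1 δ with hδ1 | hδ1
  · have h0 : (1:ℝ≥0∞) - ENNReal.ofReal δ = 0 := tsub_eq_zero_of_le (by
      rw [← ENNReal.ofReal_one]
      exact ENNReal.ofReal_le_ofReal hδ1)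
    rw [h0]
    exact zero_le
  obtain ⟨hp0, hp1⟩ := hp
  set Y : ℕ → Ω → ℝ := fun i => Z (i+1) with hYdef
  have hYm : ∀ i, Measurable (Y i) := fun i => hmeas (i+1)
  have hYindep : iIndepFun Y μ :=
    iIndepFun_succ hindep
  have hYval : ∀ i ω, Y i ω = 0 ∨ Y i ω = 1 := fun i ω => hval (i+1) ω
  have hYbern : ∀ i, μ {ω | Y i ω = 1} = ENNReal.ofReal p := fun i => hbern (i+1)
  have hU := onesided_union hp0 hp1 hYm hYindep hYval hYbern δ hδ hδ1
  -- lower tail via 1 - Y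
  set Y' : ℕ → Ω → ℝ := fun i ω => 1 - Y i ω with hY'def
  have hY'm : ∀ i, Measurable (Y' i) := fun i => measurable_const.sub (hYm i)
  have hY'indep : iIndepFun Y' μ :=
    hYindep.comp (fun _ => fun x : ℝ => 1 - x) (fun _ => measurable_const.sub measurable_id)
  have hY'val : ∀ i ω, Y' i ω = 0 ∨ Y' i ω = 1 := by
    intro i ω
    rcases hYval i ω with h | h <;> simp [hY'def, h]
  have hY'bern : ∀ i, μ {ω | Y' i ω = 1} = ENNReal.ofReal (1 - p) := by
    intro i
    have hset : {ω | Y' i ω = 1} = {ω | Y i ω = 1}ᶜ := by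
      ext ω
      rcases hYval i ω with h | h <;> simp [hY'def, h]
    have hms : MeasurableSet {ω | Y i ω = 1} := hYm i (measurableSet_singleton 1)
    rw [hset, measure_compl hms (measure_ne_top μ _),
      hYbern i, measure_univ, ENNReal.ofReal_sub _ hp0, ENNReal.ofReal_one]
  have hL := onesided_union (p := 1 - p) (by linarith) (by linarith) hY'm hY'indep hY'val
    hY'bern δ hδ hδ1
  set S : ℕ → Ω → ℝ := fun n ω => ∑ i ∈ Finset.range n, Y i ω with hSdef
  have hflip : ∀ (n : ℕ) ω, (∑ i ∈ Finset.range n, Y' i ω) - (n:ℝ) * (1 - p)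
      = -((S n ω) - n * p) := by
    intro n ω
    show (∑ i ∈ Finset.range n, ((1:ℝ) - Y i ω)) - (n:ℝ) * (1 - p)
        = -((∑ i ∈ Finset.range n, Y i ω) - n * p)
    rw [Finset.sum_sub_distrib, Finset.sum_const, Finset.card_range]
    simp only [nsmul_eq_mul, mul_one]
    ring
  set B : ℕ → ℝ := fun n => Real.sqrt ((n:ℝ) * ((3/5) * Real.log (Real.log n / Real.log (11/10) + 1)
      + (5/9) * Real.log (24/δ))) with hBdef
  set Gd : Set Ω := {ω | ∀ n : ℕ, 1 ≤ n → |S n ω - n * p| ≤ B n} with hGddef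
  have hGdmeas : MeasurableSet Gd := by
    rw [hGddef, Set.setOf_forall]
    apply MeasurableSet.iInter
    intro n
    by_cases h : 1 ≤ n
    · have hS : Measurable (S n) := Finset.measurable_sum _ (fun i _ => hYm i)
      simp only [h, true_implies]
      exact measurableSet_le ((hS.sub_const _).abs) measurable_const
    · simp only [h, false_implies]
      simp [Set.setOf_true]
  have hcompl : Gdᶜ ⊆
      {ω | ∃ n : ℕ, 1 ≤ n ∧ Real.sqrt (n * ((3/5) * Real.log (Real.log n / Real.log (11/10) + 1)
          + (5/9) * Real.log (24/δ))) < (∑ i ∈ Finset.range n, Y i ω) - n * p}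
      ∪ {ω | ∃ n : ℕ, 1 ≤ n ∧ Real.sqrt (n * ((3/5) * Real.log (Real.log n / Real.log (11/10) + 1)
          + (5/9) * Real.log (24/δ))) < (∑ i ∈ Finset.range n, Y' i ω) - n * (1 - p)} := by
    intro ω hω
    simp only [hGddef, Set.mem_compl_iff, Set.mem_setOf_eq, not_forall] at hω
    obtain ⟨n, hn1, hgt⟩ := hω
    rw [not_le] at hgt
    rcases abs_cases (S n ω - n * p) with ⟨habs, _⟩ | ⟨habs, _⟩
    · left
      refine ⟨n, hn1, ?_⟩
      rw [habs] at hgt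
      simpa [hBdef, hSdef] using hgt
    · right
      refine ⟨n, hn1, ?_⟩
      rw [habs] at hgt
      rw [hflip n ω]
      simpa [hBdef] using hgt
  have hbound : μ Gdᶜ ≤ ENNReal.ofReal δ := by
    calc μ Gdᶜ ≤ μ (_ ∪ _) := measure_mono hcompl
    _ ≤ _ + _ := measure_union_le _ _
    _ ≤ ENNReal.ofReal (δ/2) + ENNReal.ofReal (δ/2) := add_le_add hU hL
    _ = ENNReal.ofReal δ := by
        rw [← ENNReal.ofReal_add (by linarith) (by linarith)]
        norm_num
  have hGd : 1 - ENNReal.ofReal δ ≤ μ Gd := by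
    have h1 : μ Gdᶜ = 1 - μ Gd := by
      rw [measure_compl hGdmeas (measure_ne_top μ _), measure_univ]
    have h2 : μ Gd = 1 - μ Gdᶜ := by
      rw [h1, ENNReal.sub_sub_cancel (by simp) prob_le_one]
    rw [h2]
    exact tsub_le_tsub_left hbound 1
  refine le_trans hGd (measure_mono ?_)
  intro ω hω n hJn
  have hn1 : 1 ≤ n := by
    have h := hJ1 ω
    rw [hJn] at h
    exact_mod_cast h
  have hnR : (0:ℝ) < n := by exact_mod_cast hn1
  have hSmu : muhat Z n ω = S n ω / n := by
    rw [muhat, hSdef]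
    have hIcc : ∑ i ∈ Finset.Icc 1 n, Z i ω = ∑ i ∈ Finset.range n, Y i ω := by
      rw [← Finset.Ico_add_one_right_eq_Icc, Finset.sum_Ico_eq_sum_range]
      refine Finset.sum_congr (by norm_num) fun i _ => ?_
      show Z (1 + i) ω = Z (i + 1) ω
      rw [add_comm]
    rw [hIcc]
    ring
  have hω' : |S n ω - n * p| ≤ B n := hω n hn1
  have heps : eps δ n = Real.sqrt (((3/5) * Real.log (Real.log n / Real.log (11/10) + 1)
      + (5/9) * Real.log (24/δ)) / n) := rfl
  rw [hSmu, heps]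
  set A : ℝ := (3/5) * Real.log (Real.log n / Real.log (11/10) + 1)
      + (5/9) * Real.log (24/δ) with hAdef
  have hBA : B n = Real.sqrt ((n:ℝ) * A) := by rw [hBdef]
  have hkey : Real.sqrt ((n:ℝ) * A) = n * Real.sqrt (A / n) := by
    have h1 : (n:ℝ) * Real.sqrt (A / n) = Real.sqrt ((n:ℝ)^2 * (A / n)) := by
      rw [Real.sqrt_mul (sq_nonneg _), Real.sqrt_sq hnR.le]
    rw [h1]
    congr 1
    field_simp
  have hdiv : S n ω / n - p = (S n ω - n * p) / n := by
    field_simp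
  rw [hdiv, abs_div, abs_of_pos hnR]
  rw [div_le_iff₀ hnR]
  calc |S n ω - n * p| ≤ B n := hω'
  _ = (n:ℝ) * Real.sqrt (A / n) := by rw [hBA, hkey]
  _ = Real.sqrt (A / n) * n := by ring
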